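/- Let R be a finite commutative ring such that Γ(R, R×) is connected, and let D = {I₁,…,I_k} be nonzero principal ideals with I₁ + ⋯ + I_k = R. Then the diameter of the gcd-graph G_R(D) is at most 3k. -/

import Mathlib

open Ideal SimpleGraph

section aux
variable {R : Type*} [CommRing R] [Finite R]

private lemma myIsUnit_iff {x : R} :
    IsUnit x ↔ ∀ m : Ideal R, m.IsMaximal → x ∉ m := by
  constructor
  · intro hx m hm hxm
    exact hm.ne_top (m.eq_top_of_isUnit_mem hxm hx)
  · intro h
    by_contra hx
    obtain ⟨m, hm, hle⟩ := Ideal.exists_le_maximal (Ideal.span {x})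
      (fun ht => hx (Ideal.span_singleton_eq_top.mp ht))
    exact h m hm (hle (Ideal.mem_span_singleton_self x))

private lemma exists_congruent (c : {I : Ideal R // I.IsMaximal} → R) :
    ∃ u : R, ∀ i : {I : Ideal R // I.IsMaximal}, u - c i ∈ i.1 := by
  haveI : Finite (Ideal R) :=
    Finite.of_injective (fun I : Ideal R => (I : Set R)) SetLike.coe_injective
  have hco : Pairwise (Function.onFun IsCoprime fun i : {I : Ideal R // I.IsMaximal} => i.1) := by
    intro i j hij
    exact Ideal.isCoprime_iff_sup_eq.mpr <| i.2.coprime_of_ne j.2 <| by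
      simpa [Subtype.ext_iff] using hij
  obtain ⟨y, hy⟩ := Ideal.quotientInfToPiQuotient_surj hco
    (fun i => Ideal.Quotient.mk _ (c i))
  obtain ⟨u, rfl⟩ := Ideal.Quotient.mk_surjective y
  refine ⟨u, fun i => ?_⟩
  have := congrFun hy i
  rw [Ideal.quotientInfToPiQuotient_mk'] at this
  exact (Submodule.Quotient.eq _).mp this

private lemma exists_two_units (x : R)
    (h : ∀ m : Ideal R, m.IsMaximal → ∃ u, u ∉ m ∧ x - u ∉ m) :
    ∃ u v : R, IsUnit u ∧ IsUnit v ∧ u + v = x := by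
  choose f hf1 hf2 using h
  obtain ⟨u, hu⟩ := exists_congruent (fun i : {I : Ideal R // I.IsMaximal} => f i.1 i.2)
  refine ⟨u, x - u, ?_, ?_, by ring⟩
  · rw [myIsUnit_iff]
    intro m hm hum
    exact hf1 m hm (by simpa using m.sub_mem hum (hu ⟨m, hm⟩))
  · rw [myIsUnit_iff]
    intro m hm hxm
    apply hf2 m hm
    have heq : x - f m hm = (x - u) + (u - f m hm) := by ring
    rw [heq]
    exact m.add_mem hxm (hu ⟨m, hm⟩)

private lemma list_sum_sub_length (m : Ideal R) (L : List R) (h : ∀ u ∈ L, u - 1 ∈ m) :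
    L.sum - (L.length : R) ∈ m := by
  induction L with
  | nil => simp
  | cons a L ih =>
    have h1 : a - 1 ∈ m := h a (by simp)
    have h2 : L.sum - (L.length : R) ∈ m := ih (fun u hu => h u (by simp [hu]))
    have heq : (a :: L).sum - ((a :: L).length : R) = (a - 1) + (L.sum - (L.length : R)) := by
      simp [List.sum_cons]
      push_cast
      ring
    rw [heq]
    exact m.add_mem h1 h2

private lemma key_even (x : R) (L : List R) (hL : ∀ u ∈ L, IsUnit u) (hx : L.sum = x)
    (he : Even L.length) : ∃ u v : R, IsUnit u ∧ IsUnit v ∧ u + v = x := by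
  apply exists_two_units
  intro m hm
  have h1m : (1 : R) ∉ m := (Ideal.ne_top_iff_one m).mp hm.ne_top
  by_cases hbig : ∃ r : R, r ∉ m ∧ r - 1 ∉ m
  · obtain ⟨r, hr1, hr2⟩ := hbig
    by_cases hxr : x - r ∈ m
    · refine ⟨1, h1m, fun hx1 => hr2 ?_⟩
      have := m.sub_mem hx1 hxr
      convert this using 1; ring
    · exact ⟨r, hr1, hxr⟩
  · push_neg at hbig
    -- F2-like maximal ideal
    have h2 : (2 : R) ∈ m := by
      by_contra h2m
      have := hbig 2 h2m
      norm_num at this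
      exact h1m this
    have hunits : ∀ u ∈ L, u - 1 ∈ m := by
      intro u hu
      apply hbig
      intro hum
      exact hm.ne_top (m.eq_top_of_isUnit_mem hum (hL u hu))
    have hsum := list_sum_sub_length m L hunits
    obtain ⟨t, ht⟩ := he
    have hn : ((L.length : R)) ∈ m := by
      have : ((L.length : ℕ) : R) = 2 * (t : R) := by rw [ht]; push_cast; ring
      rw [this]
      exact m.mul_mem_right _ h2
    have hxm : x ∈ m := by
      have := m.add_mem hsum hn
      rw [hx] at this
      simpa using this
    refine ⟨1, h1m, fun h => h1m ?_⟩
    have := m.sub_mem hxm h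
    simpa using this

private lemma sum_le_three_units (x : R) (L : List R) (hL : ∀ u ∈ L, IsUnit u)
    (hx : L.sum = x) :
    ∃ M : List R, M.length ≤ 3 ∧ (∀ u ∈ M, IsUnit u) ∧ M.sum = x := by
  rcases Nat.even_or_odd L.length with he | ho
  · obtain ⟨u, v, hu, hv, huv⟩ := key_even x L hL hx he
    exact ⟨[u, v], by simp, by simp [hu, hv], by simpa using huv⟩
  · have he : Even ((-1 : R) :: L).length := by
      simpa [Nat.even_add_one] using ho
    have hL' : ∀ u ∈ ((-1 : R) :: L), IsUnit u := by
      intro u hu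
      rcases List.mem_cons.mp hu with rfl | hu
      · exact isUnit_one.neg
      · exact hL u hu
    obtain ⟨u, v, hu, hv, huv⟩ := key_even (x - 1) _ hL' (by rw [List.sum_cons, hx]; ring) he
    exact ⟨[1, u, v], by simp, by simp [hu, hv], by rw [List.sum_cons, List.sum_cons, List.sum_cons, List.sum_nil]; linear_combination huv⟩

private lemma reachable_sum_units {a b : R}
    (h : (SimpleGraph.fromRel (fun x y : R => IsUnit (x - y))).Reachable a b) :
    ∃ L : List R, (∀ u ∈ L, IsUnit u) ∧ L.sum = b - a := by
  obtain ⟨w⟩ := h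
  induction w with
  | nil => exact ⟨[], by simp, by simp⟩
  | @cons a b c hadj p ih =>
    obtain ⟨L, hL, hs⟩ := ih
    rw [SimpleGraph.fromRel_adj] at hadj
    have hba : IsUnit (b - a) := by
      rcases hadj.2 with h | h
      · simpa [neg_sub] using h.neg
      · exact h
    refine ⟨(b - a) :: L, ?_, by rw [List.sum_cons, hs]; ring⟩
    intro u hu
    rcases List.mem_cons.mp hu with rfl | hu
    · exact hba
    · exact hL u hu

end aux

/-- The gcd-graph of a commutative ring with respect to a set of ideals `D`. -/
def gcdGraph (R : Type*) [CommRing R] (D : Finset (Ideal R)) : SimpleGraph R :=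
  SimpleGraph.fromRel (fun x y => Ideal.span ({x - y} : Set R) ∈ D)

section aux2
variable {R : Type*} [CommRing R] [Finite R]

private lemma edist_steps (D : Finset (Ideal R)) (L : List R)
    (hL : ∀ c ∈ L, c ≠ 0 ∧ Ideal.span ({c} : Set R) ∈ D) (a : R) :
    (gcdGraph R D).edist a (a + L.sum) ≤ (L.length : ℕ∞) := by
  induction L generalizing a with
  | nil => simp
  | cons c L ih =>
    have hc := hL c (by simp)
    have hadj : (gcdGraph R D).Adj a (a + c) := by
      rw [gcdGraph, SimpleGraph.fromRel_adj]
      refine ⟨by simp [hc.1], Or.inr ?_⟩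
      simpa using hc.2
    have h1 : (gcdGraph R D).edist a (a + c) ≤ 1 := by
      have := SimpleGraph.edist_le (SimpleGraph.Walk.cons hadj SimpleGraph.Walk.nil)
      simpa using this
    have h2 := ih (fun u hu => hL u (by simp [hu])) (a + c)
    calc (gcdGraph R D).edist a (a + (c :: L).sum)
        ≤ (gcdGraph R D).edist a (a + c) + (gcdGraph R D).edist (a + c) (a + (c :: L).sum) :=
          SimpleGraph.edist_triangle
      _ ≤ 1 + (L.length : ℕ∞) := by
          refine add_le_add h1 ?_
          have : a + (c :: L).sum = (a + c) + L.sum := by simp; ring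
          rw [this]; exact h2
      _ = ((c :: L).length : ℕ∞) := by simp [add_comm]

end aux2

/-- If the unitary Cayley graph of a finite commutative ring `R` is connected and the
ideals in `D` sum to `R`, then the diameter of the gcd-graph `G_R(D)` is at most `3|D|`. -/
theorem stmt_6 {R : Type*} [CommRing R] [Finite R]
    (hG : (SimpleGraph.fromRel (fun x y : R => IsUnit (x - y))).Connected)
    (D : Finset (Ideal R)) (hD : ∀ I ∈ D, I ≠ ⊥ ∧ I.IsPrincipal)
    (hsum : (∑ I ∈ D, I) = ⊤) :
    (gcdGraph R D).diam ≤ 3 * D.card := by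
  classical
  have hunits : ∀ x : R, ∃ M : List R, M.length ≤ 3 ∧ (∀ u ∈ M, IsUnit u) ∧ M.sum = x := by
    intro x
    obtain ⟨L, hL, hs⟩ := reachable_sum_units (hG.preconnected 0 x)
    exact sum_le_three_units x L hL (by simpa using hs)
  -- decomposition lemma
  have hsteps : ∀ s : Finset (Ideal R), s ⊆ D → ∀ x : R, x ∈ (∑ I ∈ s, I : Ideal R) →
      ∃ L : List R, L.length ≤ 3 * s.card ∧
        (∀ c ∈ L, c ≠ 0 ∧ Ideal.span ({c} : Set R) ∈ D) ∧ L.sum = x := by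
    intro s
    induction s using Finset.induction_on with
    | empty =>
      intro _ x hx
      rw [Finset.sum_empty] at hx
      exact ⟨[], by simp, by simp, by simpa using ((Submodule.mem_bot R).mp hx).symm⟩
    | @insert I s hI ih =>
      intro hsub x hx
      rw [Finset.sum_insert hI, Submodule.add_eq_sup] at hx
      obtain ⟨y, hy, z, hz, hyz⟩ := Submodule.mem_sup.mp hx
      have hID : I ∈ D := hsub (Finset.mem_insert_self I s)
      obtain ⟨g, rfl⟩ := (hD I hID).2.principal
      have hg0 : g ≠ 0 := by
        intro h
        exact (hD _ hID).1 (by simp [h, Ideal.span_singleton_eq_bot])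
      obtain ⟨r, hr⟩ := Ideal.mem_span_singleton'.mp hy
      obtain ⟨M, hM3, hMu, hMs⟩ := hunits r
      obtain ⟨L₂, hL₂len, hL₂, hL₂s⟩ := ih (fun J hJ => hsub (Finset.mem_insert_of_mem hJ)) z hz
      refine ⟨M.map (· * g) ++ L₂, ?_, ?_, ?_⟩
      · rw [List.length_append, List.length_map, Finset.card_insert_of_notMem hI]
        omega
      · intro c hc
        rcases List.mem_append.mp hc with hc | hc
        · obtain ⟨u, hu, rfl⟩ := List.mem_map.mp hc
          have huu := hMu u hu
          constructor
          · intro h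
            exact hg0 ((huu.mul_right_eq_zero).mp h)
          · rw [Ideal.span_singleton_mul_left_unit huu]
            exact hID
        · exact hL₂ c hc
      · rw [List.sum_append, hL₂s]
        have : (M.map (· * g)).sum = M.sum * g := by
          simpa using List.sum_map_mul_right M id g
        rw [this, hMs, hr, hyz]
  -- bound on ediam
  have hedist : ∀ u v : R, (gcdGraph R D).edist u v ≤ ((3 * D.card : ℕ) : ℕ∞) := by
    intro u v
    have hx : u - v ∈ (∑ I ∈ D, I : Ideal R) := by rw [hsum]; trivial
    obtain ⟨L, hlen, hLc, hLs⟩ := hsteps D le_rfl (u - v) hx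
    have := edist_steps D L hLc v
    rw [hLs] at this
    have h2 : v + (u - v) = u := by ring
    rw [h2] at this
    calc (gcdGraph R D).edist u v = (gcdGraph R D).edist v u := SimpleGraph.edist_comm
      _ ≤ (L.length : ℕ∞) := this
      _ ≤ ((3 * D.card : ℕ) : ℕ∞) := by exact_mod_cast hlen
  have hediam : (gcdGraph R D).ediam ≤ ((3 * D.card : ℕ) : ℕ∞) :=
    SimpleGraph.ediam_le_of_edist_le hedist
  have := ENat.toNat_le_toNat hediam (ENat.coe_ne_top _)
  simpa [SimpleGraph.diam] using this
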